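/- For all integers m ≥ 1 and s ≥ 0, the elements (0,m) and (2^s − 1, m) of H are conjugate in the Baumslag group G(1,2) if and only if m divides s. -/

import Mathlib

/-- The ring of dyadic rationals `ℤ[1/2]`, as a subring of `ℚ`. -/
def DyadicRat : Subring ℚ := Subring.closure {(2:ℚ)⁻¹}

lemma DyadicRat.two_mem : (2:ℚ) ∈ DyadicRat := by
  have := add_mem (Subring.one_mem DyadicRat) (Subring.one_mem DyadicRat)
  rwa [one_add_one_eq_two] at this

lemma DyadicRat.half_mem : (2:ℚ)⁻¹ ∈ DyadicRat := Subring.subset_closure rfl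

/-- `2` as a unit of `ℤ[1/2]`. -/
def DyadicRat.two : DyadicRatˣ where
  val := ⟨2, DyadicRat.two_mem⟩
  inv := ⟨(2:ℚ)⁻¹, DyadicRat.half_mem⟩
  val_inv := by ext; norm_num
  inv_val := by ext; norm_num

/-- The powers `2^m` for `m : ℤ`, as elements of `ℤ[1/2]`. -/
def pow2 (m : ℤ) : DyadicRat := ((DyadicRat.two ^ m : DyadicRatˣ) : DyadicRat)

lemma pow2_add (m q : ℤ) : pow2 (m + q) = pow2 m * pow2 q := by
  simp [pow2, zpow_add]

lemma pow2_zero : pow2 0 = 1 := by simp [pow2]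

/-- The group `H = ℤ[1/2] ⋊ ℤ`, where `ℤ` acts by powers of `2`;
multiplication is `(r,m)·(s,q) = (r + 2^m·s, m+q)`. -/
@[ext] structure Hgrp where
  r : DyadicRat
  m : ℤ

instance : Mul Hgrp := ⟨fun x y => ⟨x.r + pow2 x.m * y.r, x.m + y.m⟩⟩
instance : One Hgrp := ⟨⟨0, 0⟩⟩
instance : Inv Hgrp := ⟨fun x => ⟨-(pow2 (-x.m) * x.r), -x.m⟩⟩

lemma Hgrp.mul_def (x y : Hgrp) : x * y = ⟨x.r + pow2 x.m * y.r, x.m + y.m⟩ := rfl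
lemma Hgrp.one_def : (1 : Hgrp) = ⟨0, 0⟩ := rfl
lemma Hgrp.inv_def (x : Hgrp) : x⁻¹ = ⟨-(pow2 (-x.m) * x.r), -x.m⟩ := rfl

instance : Group Hgrp where
  mul_assoc a b c := by
    simp only [Hgrp.mul_def, Hgrp.mk.injEq, pow2_add]
    constructor <;> ring
  one_mul a := by
    obtain ⟨r, m⟩ := a
    simp only [Hgrp.one_def, Hgrp.mul_def, Hgrp.mk.injEq, pow2_zero]
    constructor <;> ring
  mul_one a := by
    obtain ⟨r, m⟩ := a
    simp only [Hgrp.one_def, Hgrp.mul_def, Hgrp.mk.injEq, pow2_zero]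
    constructor <;> ring
  inv_mul_cancel a := by
    simp only [Hgrp.inv_def, Hgrp.mul_def, Hgrp.one_def, Hgrp.mk.injEq]
    constructor <;> ring

/-- Conjugacy in `H`. -/
def conjH (x y : Hgrp) : Prop := ∃ z : Hgrp, z * x * z⁻¹ = y

/-- The element `a = (1,0)` of `H`. -/
def aH : Hgrp := ⟨1, 0⟩
/-- The element `t = (0,1)` of `H`. -/
def tH : Hgrp := ⟨0, 1⟩
lemma aH_zpow (n : ℤ) : aH ^ n = Hgrp.mk (n : DyadicRat) 0 := by
  induction n using Int.induction_on with
  | zero => simp [Hgrp.one_def]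
  | succ k ih =>
      rw [zpow_add_one, ih]
      simp only [aH, Hgrp.mul_def, Hgrp.mk.injEq, pow2_zero]
      push_cast
      constructor <;> first | ring | simp | (push_cast; ring) | (simp; ring)
  | pred k ih =>
      rw [zpow_sub_one, ih]
      simp only [aH, Hgrp.inv_def, Hgrp.mul_def, Hgrp.mk.injEq, pow2_zero, neg_zero]
      push_cast
      constructor <;> first | ring | simp | (push_cast; ring) | (simp; ring)

lemma tH_zpow (n : ℤ) : tH ^ n = Hgrp.mk 0 n := by
  induction n using Int.induction_on with
  | zero => simp [Hgrp.one_def]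
  | succ k ih =>
      rw [zpow_add_one, ih]
      simp [tH, Hgrp.mul_def]
  | pred k ih =>
      rw [zpow_sub_one, ih]
      simp only [tH, Hgrp.inv_def, Hgrp.mul_def, Hgrp.mk.injEq]
      constructor <;> ring

lemma aH_zpow_injective : Function.Injective fun n : ℤ => aH ^ n := by
  intro x y h
  simp only [aH_zpow, Hgrp.mk.injEq] at h
  have : ((x : DyadicRat) : ℚ) = ((y : DyadicRat) : ℚ) := by rw [h.1]
  simpa using this

lemma tH_zpow_injective : Function.Injective fun n : ℤ => tH ^ n := by
  intro x y h
  simp only [tH_zpow, Hgrp.mk.injEq] at h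
  exact h.2

/-- The homomorphism `ℤ →* G` given by powers of `g`. -/
def zintHom {G : Type*} [Group G] (g : G) : Multiplicative ℤ →* G where
  toFun n := g ^ (Multiplicative.toAdd n)
  map_one' := by simp
  map_mul' x y := by simp [zpow_add]

/-- For `g` with `n ↦ g ^ n` injective, `⟨g⟩ ≅ ℤ`. -/
noncomputable def zpowMulEquiv {G : Type*} [Group G] (g : G)
    (hg : Function.Injective fun n : ℤ => g ^ n) :
    Multiplicative ℤ ≃* Subgroup.zpowers g := by
  refine MulEquiv.ofBijective
    ((zintHom g).codRestrict (Subgroup.zpowers g).toSubmonoid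
      (fun n => Subgroup.mem_zpowers_iff.mpr ⟨Multiplicative.toAdd n, rfl⟩)) ⟨?_, ?_⟩
  · intro x y h
    have : g ^ (Multiplicative.toAdd x) = g ^ (Multiplicative.toAdd y) :=
      congrArg Subtype.val h
    exact hg this
  · rintro ⟨x, hx⟩
    obtain ⟨n, hn⟩ := Subgroup.mem_zpowers_iff.mp hx
    exact ⟨Multiplicative.ofAdd n, Subtype.ext hn⟩

/-- The associated isomorphism `⟨a⟩ ≅ ⟨t⟩`, `a ↦ t`, of the HNN extension defining
the Baumslag group. -/
noncomputable def φBS : Subgroup.zpowers aH ≃* Subgroup.zpowers tH :=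
  (zpowMulEquiv aH aH_zpow_injective).symm.trans (zpowMulEquiv tH tH_zpow_injective)

/-- The Baumslag group `G(1,2)`, as HNN extension of `H = BS(1,2)` with stable letter `b`,
associated subgroups `⟨a⟩` and `⟨t⟩`, and associated isomorphism `a ↦ t`. -/
noncomputable abbrev BG := HNNExtension Hgrp (Subgroup.zpowers aH) (Subgroup.zpowers tH) φBS

/-- The embedding of `H` into the Baumslag group. -/
noncomputable def ι : Hgrp →* BG := HNNExtension.of

/-- The stable letter `b` of the Baumslag group. -/
noncomputable def bBG : BG := HNNExtension.t

/-- Conjugacy in the Baumslag group `G(1,2)`. -/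
def conjBG (x y : BG) : Prop := ∃ z : BG, z * x * z⁻¹ = y


namespace HNNExtension
open NormalWord

variable {G : Type*} [Group G] {A B : Subgroup G} {φ : A ≃* B}

lemma t_zpow_conj (u : ℤˣ) (a : toSubgroup A B u) :
    (t ^ (u : ℤ) * of (a : G) * (t ^ (u : ℤ))⁻¹ : HNNExtension G A B φ)
      = of (toSubgroupEquiv φ u a : G) := by
  rcases Int.units_eq_one_or u with rfl | rfl
  · have := (equiv_eq_conj (φ := φ) a).symm
    simp at this ⊢
    exact this
  · have := (equiv_symm_eq_conj (φ := φ) a).symm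
    simp [mul_assoc] at this ⊢
    exact this

/-- multiply the last letter of a word by `x` on the right -/
def mulLast (x : G) : List (ℤˣ × G) → List (ℤˣ × G)
  | [] => []
  | [(u, g)] => [(u, g * x)]
  | a :: l => a :: mulLast x l

@[simp] lemma mulLast_nil (x : G) : mulLast x [] = [] := rfl

lemma mulLast_cons_cons (x : G) (a b : ℤˣ × G) (l : List (ℤˣ × G)) :
    mulLast x (a :: b :: l) = a :: mulLast x (b :: l) := rfl

lemma mulLast_map_fst (x : G) : ∀ l : List (ℤˣ × G),
    (mulLast x l).map Prod.fst = l.map Prod.fst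
  | [] => rfl
  | [(u, g)] => rfl
  | a :: b :: l => by
    rw [mulLast_cons_cons, List.map_cons, List.map_cons, mulLast_map_fst x (b :: l)]

lemma mulLast_chain (x : G) (l : List (ℤˣ × G))
    (h : l.IsChain (fun a b => a.2 ∈ toSubgroup A B a.1 → a.1 = b.1)) :
    (mulLast x l).IsChain (fun a b => a.2 ∈ toSubgroup A B a.1 → a.1 = b.1) := by
  induction l with
  | nil => simp
  | cons a l ih =>
    cases l with
    | nil => rcases a with ⟨u, g⟩; exact List.isChain_singleton _
    | cons b l =>
      rw [mulLast_cons_cons]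
      rw [List.isChain_cons] at h ⊢
      refine ⟨?_, ih h.2⟩
      intro p hp hmem
      have h1 : (mulLast x (b :: l)).map Prod.fst = (b :: l).map Prod.fst :=
        mulLast_map_fst x _
      have hp1 : p.1 = b.1 := by
        have := congrArg List.head? h1
        rw [List.head?_map, List.head?_map, hp] at this
        simpa using this
      rw [hp1]
      exact h.1 b rfl hmem

lemma mulLast_prod (x : G) : ∀ (l : List (ℤˣ × G)), l ≠ [] →
    ((mulLast x l).map (fun p => t ^ (p.1 : ℤ) * of p.2)).prod
      = ((l.map (fun p => t ^ (p.1 : ℤ) * of p.2)).prod : HNNExtension G A B φ) * of x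
  | [], h => absurd rfl h
  | [(u, g)], _ => by simp [mulLast, mul_assoc]
  | a :: b :: l, _ => by
    rw [mulLast_cons_cons, List.map_cons, List.prod_cons, List.map_cons, List.prod_cons,
      mulLast_prod x (b :: l) (by simp)]
    simp [mul_assoc]

theorem mem_of_conj_of (S : Set G)
    (hconjS : ∀ g x, x ∈ S → g * x * g⁻¹ ∈ S)
    (hφS : ∀ (u : ℤˣ) (a : toSubgroup A B u), (a : G) ∈ S → (toSubgroupEquiv φ u a : G) ∈ S)
    (z : HNNExtension G A B φ) (x y : G) (hx : x ∈ S)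
    (h : z * of x * z⁻¹ = of y) : y ∈ S := by
  obtain ⟨d⟩ := TransversalPair.nonempty G A B
  obtain ⟨w, hw⟩ : ∃ w : ReducedWord G A B, w.prod φ = z :=
    ⟨(z • (HNNExtension.NormalWord.empty : HNNExtension.NormalWord d)).toReducedWord, by
      have := prod_smul φ z (HNNExtension.NormalWord.empty : HNNExtension.NormalWord d)
      simpa using this⟩
  subst hw
  suffices H : ∀ (n : ℕ) (w : ReducedWord G A B), w.toList.length = n →
      ∀ x y : G, x ∈ S → w.prod φ * of x * (w.prod φ)⁻¹ = of y → y ∈ S by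
    exact H w.toList.length w rfl x y hx h
  clear hx h x y
  intro n
  induction n with
  | zero =>
    intro w hlen x y hx h
    have hnil : w.toList = [] := List.length_eq_zero_iff.mp hlen
    have hpw : w.prod φ = of w.head := by
      simp [ReducedWord.prod, hnil]
    rw [hpw, ← map_inv, ← map_mul, ← map_mul] at h
    have hy : w.head * x * w.head⁻¹ = y := HNNExtension.of_injective (φ := φ) h
    exact hy ▸ hconjS _ _ hx
  | succ n ih =>
    intro w hlen x y hx h
    obtain ⟨⟨u₁, g₁⟩, rest, hcons⟩ : ∃ a l, w.toList = a :: l := by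
      cases e : w.toList with
      | nil => rw [e] at hlen; simp at hlen
      | cons a l => exact ⟨a, l, rfl⟩
    have hchain := w.chain
    rw [hcons] at hchain
    -- the reduced word for z * of x
    have hne : w.toList ≠ [] := by rw [hcons]; simp
    let w₁ : ReducedWord G A B :=
      ⟨w.head, mulLast x w.toList, mulLast_chain x _ w.chain⟩
    have hw₁ : w₁.prod φ = w.prod φ * of x := by
      show of w.head * _ = _
      rw [mulLast_prod x w.toList hne, ReducedWord.prod, mul_assoc]
    -- the reduced word for of y * z
    let w₂ : ReducedWord G A B := ⟨y * w.head, w.toList, w.chain⟩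
    have hw₂ : w₂.prod φ = of y * w.prod φ := by
      show of (y * w.head) * _ = _
      rw [map_mul, ReducedWord.prod, mul_assoc]
    have hprod : w₁.prod φ = w₂.prod φ := by
      rw [hw₁, hw₂, ← h]; group
    have hmem : w.head⁻¹ * (y * w.head) ∈ toSubgroup A B (-u₁) := by
      refine (ReducedWord.map_fst_eq_and_of_prod_eq φ hprod).2 u₁ ?_
      show u₁ ∈ (w₁.toList.head?).map Prod.fst
      have h1 : w₁.toList.map Prod.fst = w.toList.map Prod.fst := mulLast_map_fst x _
      have := congrArg List.head? h1
      rw [List.head?_map, List.head?_map] at this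
      rw [this, hcons]
      simp
    have hmem' : w.head⁻¹ * y * w.head ∈ toSubgroup A B (-u₁) := by
      rwa [← mul_assoc] at hmem
    set b : toSubgroup A B (-u₁) := ⟨w.head⁻¹ * y * w.head, hmem'⟩ with hb
    -- tail word
    let w' : ReducedWord G A B := ⟨g₁, rest, (List.isChain_cons.mp hchain).2⟩
    have hwp : w.prod φ = of w.head * (t ^ (u₁ : ℤ) * w'.prod φ) := by
      rw [ReducedWord.prod, ReducedWord.prod, hcons]
      simp [mul_assoc]
      rfl
    have key : w'.prod φ * of x * (w'.prod φ)⁻¹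
        = of (toSubgroupEquiv φ (-u₁) b : G) := by
      refine Eq.trans ?_ (t_zpow_conj (φ := φ) (-u₁) b)
      rw [show ((-u₁ : ℤˣ) : ℤ) = -(u₁ : ℤ) from rfl, zpow_neg, inv_inv]
      show w'.prod φ * of x * (w'.prod φ)⁻¹
        = (t ^ (u₁ : ℤ))⁻¹ * of (w.head⁻¹ * y * w.head) * t ^ (u₁ : ℤ)
      rw [hwp] at h
      have h2 : (of y : HNNExtension G A B φ) = of w.head * t ^ (u₁ : ℤ) *
          (w'.prod φ * of x * (w'.prod φ)⁻¹) * (t ^ (u₁ : ℤ))⁻¹ * (of w.head)⁻¹ := by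
        rw [← h]; group
      rw [map_mul, map_mul, map_inv, h2]
      group
    have hlen' : w'.toList.length = n := by
      have : w.toList.length = n + 1 := hlen
      rw [hcons] at this
      simpa using this
    have hy₁ : (toSubgroupEquiv φ (-u₁) b : G) ∈ S := ih w' hlen' x _ hx key
    have hb' : (b : G) ∈ S := by
      have := hφS _ _ hy₁
      rwa [toSubgroupEquiv_neg_apply] at this
    have : w.head * (w.head⁻¹ * y * w.head) * w.head⁻¹ = y := by group
    exact this ▸ hconjS w.head _ hb'

end HNNExtension

-- NEW:
lemma pow2_one_val : ((pow2 1 : DyadicRat) : ℚ) = 2 := by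
  simp [pow2, DyadicRat.two]

lemma pow2_val (q : ℤ) : ((pow2 q : DyadicRat) : ℚ) = (2 : ℚ) ^ q := by
  induction q using Int.induction_on with
  | zero => simp [pow2_zero]
  | succ k ih =>
      have key : pow2 ((k : ℤ) + 1) = pow2 k * pow2 1 := pow2_add _ _
      have h2 := congrArg (fun x : DyadicRat => (x : ℚ)) key
      push_cast [pow2_one_val] at h2
      rw [h2, ih, zpow_add₀ (by norm_num : (2:ℚ) ≠ 0)]
      norm_num
  | pred k ih =>
      have key : pow2 (-(k:ℤ) - 1) * pow2 1 = pow2 (-(k:ℤ)) := by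
        rw [← pow2_add]; congr 1; ring
      have h2 := congrArg (fun x : DyadicRat => (x : ℚ)) key
      push_cast [pow2_one_val] at h2
      rw [ih] at h2
      have h3 : (2:ℚ) ^ (-(k:ℤ) - 1) * 2 = (2:ℚ) ^ (-(k:ℤ)) := by
        rw [zpow_sub_one₀ (by norm_num : (2:ℚ) ≠ 0)]; ring
      exact mul_right_cancel₀ (by norm_num) (h2.trans h3.symm)

lemma pow2_ne_zero (q : ℤ) : (pow2 q : DyadicRat) ≠ 0 := by
  intro h
  have h2 : ((pow2 q : DyadicRat) : ℚ) = 0 := by rw [h]; rfl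
  rw [pow2_val] at h2
  exact (zpow_ne_zero q (by norm_num : (2:ℚ) ≠ 0)) h2

lemma DyadicRat.exists_rep (x : DyadicRat) : ∃ (a : ℤ) (e : ℕ), (x : ℚ) = a / 2 ^ e := by
  obtain ⟨v, hv⟩ := x
  have hv' : v ∈ Subring.closure {(2:ℚ)⁻¹} := hv
  refine Subring.closure_induction (s := {(2:ℚ)⁻¹}) (p := fun y _ => ∃ (a : ℤ) (e : ℕ), y = (a : ℚ) / 2 ^ e)
    ?_ ⟨0, 0, by norm_num⟩ ⟨1, 0, by norm_num⟩ ?_ ?_ ?_ hv'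
  · rintro y (rfl : y = (2:ℚ)⁻¹)
    exact ⟨1, 1, by norm_num⟩
  · rintro a b _ _ ⟨x1, e1, rfl⟩ ⟨x2, e2, rfl⟩
    refine ⟨x1 * 2 ^ e2 + x2 * 2 ^ e1, e1 + e2, ?_⟩
    push_cast
    rw [div_add_div _ _ (pow_ne_zero e1 (by norm_num : (2:ℚ) ≠ 0))
      (pow_ne_zero e2 (by norm_num : (2:ℚ) ≠ 0)), pow_add]
    ring
  · rintro a _ ⟨x1, e1, rfl⟩
    exact ⟨-x1, e1, by push_cast; ring⟩
  · rintro a b _ _ ⟨x1, e1, rfl⟩ ⟨x2, e2, rfl⟩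
    refine ⟨x1 * x2, e1 + e2, ?_⟩
    push_cast
    rw [div_mul_div_comm, pow_add]

-- ℕ divisibility lemma
lemma nat_dvd_of_pow_sub_one_dvd : ∀ S : ℕ, ∀ M : ℕ, 1 ≤ M → (2 ^ M - 1 ∣ 2 ^ S - 1) → M ∣ S := by
  intro S
  induction S using Nat.strong_induction_on with
  | _ S ih =>
    intro M hM h
    by_cases hSM : S < M
    · have h1 : (2:ℕ) ^ S ≤ 2 ^ M := Nat.pow_le_pow_right (by norm_num) hSM.le
      have h1' : (2:ℕ) ^ S < 2 ^ M := Nat.pow_lt_pow_right (by norm_num) hSM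
      rcases Nat.eq_zero_or_pos (2 ^ S - 1) with h0 | hpos
      · have h1S : 1 ≤ (2:ℕ) ^ S := Nat.one_le_two_pow
        have hS1 : (2:ℕ) ^ S = 1 := by omega
        have hS0 : S = 0 := by
          by_contra hne
          have := Nat.one_lt_two_pow_iff.mpr hne
          omega
        simp [hS0]
      · have := Nat.le_of_dvd hpos h
        have h2M : 1 ≤ (2:ℕ) ^ M := Nat.one_le_two_pow
        omega
    · push_neg at hSM
      have hkey : 2 ^ (S - M) * (2 ^ M - 1) + (2 ^ (S - M) - 1) = 2 ^ S - 1 := by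
        have e1 : (2:ℕ) ^ (S - M) * 2 ^ M = 2 ^ S := by
          rw [← pow_add]; congr 1; omega
        have e2 : (1:ℕ) ≤ 2 ^ (S - M) := Nat.one_le_two_pow
        have e3 : (1:ℕ) ≤ 2 ^ M := Nat.one_le_two_pow
        have e4 : (2:ℕ) ^ (S-M) ≤ 2 ^ S := Nat.pow_le_pow_right (by norm_num) (by omega)
        rw [Nat.mul_sub, e1]
        omega
      have hdvd : 2 ^ M - 1 ∣ 2 ^ (S - M) - 1 := by
        have hd : 2 ^ M - 1 ∣ 2 ^ (S - M) * (2 ^ M - 1) := Dvd.intro_left _ rfl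
        rw [← hkey] at h
        exact (Nat.dvd_add_right hd).mp h
      rcases Nat.eq_zero_or_pos (S - M) with h0 | hpos
      · have : S = M := by omega
        exact this ▸ dvd_refl M
      · have hlt : S - M < S := by omega
        have := ih (S - M) hlt M hM hdvd
        have : M ∣ (S - M) + M := Dvd.dvd.add this (dvd_refl M)
        rwa [Nat.sub_add_cancel hSM] at this

-- zpowMulEquiv apply
lemma zpowMulEquiv_apply {G : Type*} [Group G] (g : G)
    (hg : Function.Injective fun n : ℤ => g ^ n) (n : ℤ) :
    ((zpowMulEquiv g hg (Multiplicative.ofAdd n) : Subgroup.zpowers g) : G) = g ^ n := rfl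

lemma φBS_apply (k : ℤ) (h : aH ^ k ∈ Subgroup.zpowers aH) :
    ((φBS ⟨aH ^ k, h⟩ : Subgroup.zpowers tH) : Hgrp) = tH ^ k := by
  have h1 : (zpowMulEquiv aH aH_zpow_injective) (Multiplicative.ofAdd k) = ⟨aH ^ k, h⟩ :=
    Subtype.ext rfl
  have h2 : (zpowMulEquiv aH aH_zpow_injective).symm ⟨aH ^ k, h⟩ = Multiplicative.ofAdd k :=
    (MulEquiv.symm_apply_eq _).mpr h1.symm
  show ((zpowMulEquiv tH tH_zpow_injective
      ((zpowMulEquiv aH aH_zpow_injective).symm ⟨aH ^ k, h⟩) : Subgroup.zpowers tH) : Hgrp) = tH ^ k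
  rw [h2]
  rfl

lemma φBS_symm_apply (k : ℤ) (h : tH ^ k ∈ Subgroup.zpowers tH) :
    ((φBS.symm ⟨tH ^ k, h⟩ : Subgroup.zpowers aH) : Hgrp) = aH ^ k := by
  have h1 : (zpowMulEquiv tH tH_zpow_injective) (Multiplicative.ofAdd k) = ⟨tH ^ k, h⟩ :=
    Subtype.ext rfl
  have h2 : (zpowMulEquiv tH tH_zpow_injective).symm ⟨tH ^ k, h⟩ = Multiplicative.ofAdd k :=
    (MulEquiv.symm_apply_eq _).mpr h1.symm
  show ((zpowMulEquiv aH aH_zpow_injective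
      ((zpowMulEquiv tH tH_zpow_injective).symm ⟨tH ^ k, h⟩) : Subgroup.zpowers aH) : Hgrp) = aH ^ k
  rw [h2]
  rfl

/-- The invariant set: the intersection with `H` of the `G(1,2)`-conjugacy class of `t^m`. -/
def Sset (m : ℤ) : Set Hgrp :=
  {h | (h.m ≠ 0 ∧ (∃ j k : ℕ, 2 ^ j * h.m = 2 ^ k * m) ∧ ∃ c : DyadicRat, h.r = (1 - pow2 h.m) * c)
     ∨ (h.m = 0 ∧ ∃ q : ℤ, h.r = pow2 q * (m : DyadicRat))}

lemma Hgrp_conj_eq (c r : DyadicRat) (q n : ℤ) :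
    (⟨c, q⟩ * ⟨r, n⟩ * (⟨c, q⟩ : Hgrp)⁻¹ : Hgrp) = ⟨(1 - pow2 n) * c + pow2 q * r, n⟩ := by
  simp only [Hgrp.mul_def, Hgrp.inv_def, Hgrp.mk.injEq]
  constructor
  · have hp : pow2 (q + n) * pow2 (-q) = pow2 n := by
      rw [← pow2_add]; congr 1; ring
    linear_combination (-(c : DyadicRat)) * hp
  · ring

lemma Sset_conj (m : ℤ) (g x : Hgrp) (hx : x ∈ Sset m) : g * x * g⁻¹ ∈ Sset m := by
  obtain ⟨c, q⟩ := g
  obtain ⟨r, n⟩ := x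
  rw [Hgrp_conj_eq]
  rcases hx with ⟨hn, ⟨j, k, hjk⟩, ⟨c₀, hc₀⟩⟩ | ⟨hn, ⟨q₀, hq₀⟩⟩
  · dsimp only at hn hjk hc₀ ⊢
    refine Or.inl ⟨hn, ⟨j, k, hjk⟩, ⟨c + pow2 q * c₀, ?_⟩⟩
    rw [hc₀]; ring
  · dsimp only at hn hq₀ ⊢
    subst hn
    refine Or.inr ⟨rfl, ⟨q + q₀, ?_⟩⟩
    rw [hq₀, pow2_zero, pow2_add]; ring

lemma Sset_phi (m : ℤ) (hm : 1 ≤ m) (u : ℤˣ)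
    (a : HNNExtension.toSubgroup (Subgroup.zpowers aH) (Subgroup.zpowers tH) u)
    (ha : (a : Hgrp) ∈ Sset m) :
    ((HNNExtension.toSubgroupEquiv φBS u a : _) : Hgrp) ∈ Sset m := by
  have hmQ : (0:ℚ) < (m:ℚ) := by exact_mod_cast hm
  rcases Int.units_eq_one_or u with rfl | rfl
  · -- a ∈ zpowers aH, a = aH ^ k = ⟨k, 0⟩
    obtain ⟨av, hav⟩ := a
    obtain ⟨k, hk⟩ := Subgroup.mem_zpowers_iff.mp hav
    subst hk
    erw [HNNExtension.toSubgroupEquiv_one, φBS_apply k hav]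
    have ha' : aH ^ k ∈ Sset m := ha
    rw [aH_zpow] at ha'
    rcases ha' with ⟨hn, _⟩ | ⟨_, ⟨q, hq⟩⟩
    · exact absurd rfl hn
    · dsimp only at hq
      -- (k : DyadicRat) = pow2 q * m
      have hqQ : (k : ℚ) = (2:ℚ) ^ q * m := by
        have := congrArg (fun x : DyadicRat => (x : ℚ)) hq
        push_cast [pow2_val] at this
        exact_mod_cast this
      rw [tH_zpow]
      refine Or.inl ⟨?_, ⟨(-q).toNat, q.toNat, ?_⟩, ⟨0, by ring⟩⟩
      · dsimp only
        intro h0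
        rw [h0] at hqQ
        have h2q : (2:ℚ) ^ q ≠ 0 := zpow_ne_zero q (by norm_num)
        simp only [Int.cast_zero] at hqQ
        have := mul_ne_zero h2q (ne_of_gt hmQ)
        exact this hqQ.symm
      · dsimp only
        have hqe : ((((-q).toNat : ℕ) : ℤ) + q) = (q.toNat : ℤ) := by omega
        have : ((2:ℚ) ^ ((-q).toNat) * k : ℚ) = (2:ℚ) ^ (q.toNat) * m := by
          rw [hqQ, ← zpow_natCast (2:ℚ) ((-q).toNat), ← zpow_natCast (2:ℚ) (q.toNat), ← hqe,
            zpow_add₀ (by norm_num : (2:ℚ) ≠ 0)]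
          ring
        exact_mod_cast this
  · -- a ∈ zpowers tH, a = tH ^ k = ⟨0, k⟩
    obtain ⟨av, hav⟩ := a
    obtain ⟨k, hk⟩ := Subgroup.mem_zpowers_iff.mp hav
    subst hk
    erw [HNNExtension.toSubgroupEquiv_neg_one, φBS_symm_apply k hav]
    have ha' : tH ^ k ∈ Sset m := ha
    rw [tH_zpow] at ha'
    rcases ha' with ⟨hn, ⟨j, j', hjk⟩, _⟩ | ⟨hn, ⟨q, hq⟩⟩
    · dsimp only at hn hjk
      rw [aH_zpow]
      refine Or.inr ⟨rfl, ⟨(j' : ℤ) - (j : ℤ), ?_⟩⟩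
      dsimp only
      apply Subtype.ext
      push_cast [pow2_val]
      have hjkQ : (2:ℚ) ^ (j:ℕ) * (k:ℚ) = (2:ℚ) ^ (j':ℕ) * (m:ℚ) := by exact_mod_cast hjk
      have h2j : (2:ℚ) ^ (j:ℕ) ≠ 0 := pow_ne_zero _ (by norm_num)
      rw [zpow_sub₀ (by norm_num : (2:ℚ) ≠ 0), zpow_natCast, zpow_natCast]
      field_simp
      linear_combination hjkQ
    · dsimp only at hn hq
      exfalso
      have := congrArg (fun x : DyadicRat => (x : ℚ)) hq
      push_cast [pow2_val] at this
      have h2q : (2:ℚ) ^ q ≠ 0 := zpow_ne_zero q (by norm_num)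
      exact (mul_ne_zero h2q (ne_of_gt hmQ)) this.symm

theorem stmt8 (m s : ℤ) (hm : 1 ≤ m) (hs : 0 ≤ s) :
    conjBG (ι ⟨0, m⟩) (ι ⟨((2 ^ s.toNat - 1 : ℤ) : DyadicRat), m⟩) ↔ m ∣ s := by
  have hmM : ((m.toNat : ℕ) : ℤ) = m := Int.toNat_of_nonneg (by omega)
  have hsS : ((s.toNat : ℕ) : ℤ) = s := Int.toNat_of_nonneg hs
  set M := m.toNat with hMdef
  set S := s.toNat with hSdef
  have h1M : 1 ≤ (2:ℕ) ^ M := Nat.one_le_two_pow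
  have h1S : 1 ≤ (2:ℕ) ^ S := Nat.one_le_two_pow
  have hzQ : (2:ℚ) ^ (m : ℤ) = 2 ^ M := by rw [← hmM, zpow_natCast]
  constructor
  · rintro ⟨z, hz⟩
    have hx : (⟨0, m⟩ : Hgrp) ∈ Sset m :=
      Or.inl ⟨show m ≠ 0 by omega, ⟨0, 0, by ring⟩, ⟨0, by ring⟩⟩
    have hy := HNNExtension.mem_of_conj_of (Sset m) (Sset_conj m) (Sset_phi m hm) z _ _ hx hz
    rcases hy with ⟨_, _, ⟨c, hc⟩⟩ | ⟨hm0, _⟩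
    swap
    · exact absurd (show m = 0 from hm0) (by omega)
    obtain ⟨a, e, hae⟩ := DyadicRat.exists_rep c
    have hcQ : ((2 ^ S - 1 : ℤ) : ℚ) = (1 - (2:ℚ) ^ M) * ((a : ℚ) / 2 ^ e) := by
      have h2d : ((2 : DyadicRat) : ℚ) = 2 := rfl
      have := congrArg (fun x : DyadicRat => (x : ℚ)) hc
      push_cast [pow2_val, h2d] at this
      rw [hzQ] at this
      rw [hae] at this
      push_cast [h2d]
      exact_mod_cast this
    have h2e : ((2:ℚ)) ^ e ≠ 0 := pow_ne_zero _ (by norm_num)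
    have hQ : (2:ℚ) ^ e * ((2:ℚ) ^ S - 1) = (1 - 2 ^ M) * a := by
      have : ((2 ^ S - 1 : ℤ) : ℚ) = (2:ℚ) ^ S - 1 := by push_cast; ring
      rw [this] at hcQ
      rw [hcQ]
      field_simp
    have hZ : (2:ℤ) ^ e * (2 ^ S - 1) = (1 - 2 ^ M) * a := by exact_mod_cast hQ
    have hdvd : ((2:ℤ) ^ M - 1) ∣ 2 ^ e * (2 ^ S - 1) := ⟨-a, by linear_combination hZ⟩
    have hcop2 : IsCoprime ((2:ℤ) ^ M - 1) 2 := by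
      refine ⟨-1, 2 ^ (M - 1), ?_⟩
      have : (2:ℤ) ^ (M - 1) * 2 = 2 ^ M := by
        rw [← pow_succ]; congr 1; omega
      linear_combination this
    have hcop : IsCoprime ((2:ℤ) ^ M - 1) ((2:ℤ) ^ e) := hcop2.pow_right
    have hdvd2 : ((2:ℤ) ^ M - 1) ∣ (2 ^ S - 1) := hcop.dvd_of_dvd_mul_left hdvd
    have hcastM : (((2 ^ M - 1 : ℕ)) : ℤ) = 2 ^ M - 1 := by
      rw [Nat.cast_sub h1M]; push_cast; ring
    have hcastS : (((2 ^ S - 1 : ℕ)) : ℤ) = 2 ^ S - 1 := by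
      rw [Nat.cast_sub h1S]; push_cast; ring
    have hN : (2 ^ M - 1 : ℕ) ∣ (2 ^ S - 1 : ℕ) := by
      rw [← Int.natCast_dvd_natCast, hcastM, hcastS]
      exact hdvd2
    have hMS : M ∣ S := nat_dvd_of_pow_sub_one_dvd S M (by omega) hN
    rw [← hmM, ← hsS]
    exact_mod_cast hMS
  · intro hdvd
    have hMS : M ∣ S := by
      rw [← Int.natCast_dvd_natCast, hmM, hsS] at *
      exact hdvd
    obtain ⟨K, hK⟩ := hMS
    have hdvdZ : ((2:ℤ) ^ M - 1) ∣ (2 ^ S - 1) := by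
      have h0 := sub_dvd_pow_sub_pow ((2:ℤ) ^ M) 1 K
      rw [← pow_mul, one_pow, ← hK] at h0
      exact h0
    obtain ⟨k, hk⟩ := hdvdZ
    refine ⟨ι ⟨((-k : ℤ) : DyadicRat), 0⟩, ?_⟩
    rw [← map_inv, ← map_mul, ← map_mul]
    congr 1
    rw [Hgrp_conj_eq]
    simp only [Hgrp.mk.injEq]
    refine ⟨?_, trivial⟩
    apply Subtype.ext
    have h2d : ((2 : DyadicRat) : ℚ) = 2 := rfl
    push_cast [pow2_val, pow2_zero, h2d]
    rw [hzQ]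
    have hkQ : (2:ℚ) ^ S - 1 = ((2:ℚ) ^ M - 1) * k := by exact_mod_cast hk
    linear_combination -hkQ
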